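/- arXiv:2002.11856 — 6 statements merged into one kernel-verified Lean document; each statement's English description precedes it below -/
import Mathlib

section
/- If h : ℂⁿ → ℂ is an entire function such that the map z ↦ h(z)·z from ℂⁿ to ℂⁿ is injective and h(0) = 1, then h is identically equal to 1. -/
open Filter Metric Set Topology

/-- 1-D key lemma: if `φ` is entire with `φ 0 = 1` and `t ↦ t * φ t` is injective,
then `φ ≡ 1`. -/
lemma one_dim_key (φ : ℂ → ℂ) (hφ : Differentiable ℂ φ) (hφ0 : φ 0 = 1)
    (hinj : Function.Injective fun t : ℂ => t * φ t) : ∀ t, φ t = 1 := by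
  set g : ℂ → ℂ := fun t => t * φ t with hg_def
  have hg0 : g 0 = 0 := by simp [hg_def]
  have hgdiff : Differentiable ℂ g := differentiable_id.mul hφ
  -- φ never vanishes
  have hφne : ∀ t, φ t ≠ 0 := by
    intro t ht
    have : g t = g 0 := by simp [hg_def, ht]
    have := hinj this
    rw [this] at ht
    rw [hφ0] at ht
    exact one_ne_zero ht
  -- open mapping at 0
  have hga : AnalyticAt ℂ g 0 := hgdiff.analyticAt 0
  rcases hga.eventually_constant_or_nhds_le_map_nhds with hc | hmap
  · -- g eventually constant near 0: contradicts injectivity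
    exfalso
    rcases Metric.eventually_nhds_iff.1 hc with ⟨δ, hδ, hδc⟩
    have h1 : g ((δ / 2 : ℝ) : ℂ) = g 0 := by
      apply hδc
      rw [dist_zero_right, Complex.norm_real, Real.norm_eq_abs,
        abs_of_pos (half_pos hδ)]
      linarith
    have := hinj h1
    have : (δ / 2 : ℝ) = 0 := by exact_mod_cast congrArg Complex.re this
    linarith
  · -- g '' ball 0 1 is a neighborhood of 0
    have himg : g '' ball (0 : ℂ) 1 ∈ 𝓝 (0 : ℂ) := by
      have h2 : g '' ball (0 : ℂ) 1 ∈ map g (𝓝 0) :=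
        image_mem_map (ball_mem_nhds (0 : ℂ) one_pos)
      have h3 := hmap h2
      rwa [hg0] at h3
    rcases Metric.mem_nhds_iff.1 himg with ⟨ε, hε, hball⟩
    -- lower bound on ‖g t‖ for ‖t‖ ≥ 1
    have hlow : ∀ t : ℂ, 1 ≤ ‖t‖ → ε ≤ ‖g t‖ := by
      intro t ht
      by_contra hlt
      push_neg at hlt
      have : g t ∈ ball (0 : ℂ) ε := by simpa [mem_ball, dist_eq_norm] using hlt
      rcases hball this with ⟨s, hs, hst⟩
      have : s = t := hinj hst
      rw [this] at hs
      rw [mem_ball, dist_eq_norm, sub_zero] at hs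
      linarith
    -- q = 1/φ is entire
    set q : ℂ → ℂ := fun t => (φ t)⁻¹ with hq_def
    have hqdiff : Differentiable ℂ q := fun t => ((hφ t).inv (hφne t))
    have hq0 : q 0 = 1 := by simp [hq_def, hφ0]
    -- growth of q
    have hqgrow : ∀ t : ℂ, 1 ≤ ‖t‖ → ‖q t‖ ≤ ‖t‖ / ε := by
      intro t ht
      have htne : (t : ℂ) ≠ 0 := by
        intro h0'; rw [h0'] at ht; simp at ht; linarith
      have hqe : q t = t / g t := by
        simp only [hq_def, hg_def]
        rw [eq_div_iff (mul_ne_zero htne (hφne t))]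
        rw [mul_comm t (φ t), ← mul_assoc, inv_mul_cancel₀ (hφne t), one_mul]
      rw [hqe, norm_div]
      have hgne : ‖g t‖ ≠ 0 := by
        have := hlow t ht; intro h'; rw [h'] at this; linarith
      rw [div_le_div_iff₀ (lt_of_le_of_ne (norm_nonneg _) (Ne.symm hgne)) hε]
      have : ‖t‖ * ε ≤ ‖t‖ * ‖g t‖ :=
        mul_le_mul_of_nonneg_left (hlow t ht) (norm_nonneg t)
      linarith [this]
    -- r = dslope q 0 is entire and bounded
    set r : ℂ → ℂ := dslope q 0 with hr_def
    have hrdiff : Differentiable ℂ r := by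
      rw [← differentiableOn_univ]
      exact (Complex.differentiableOn_dslope univ_mem).2 hqdiff.differentiableOn
    -- bound on the closed unit ball
    obtain ⟨C, hC⟩ : ∃ C, ∀ t ∈ closedBall (0 : ℂ) 1, ‖r t‖ ≤ C :=
      (isCompact_closedBall 0 1).exists_bound_of_continuousOn
        hrdiff.continuous.continuousOn
    have hrbound : ∀ t : ℂ, ‖r t‖ ≤ max C (1 / ε + 1) := by
      intro t
      rcases le_or_gt ‖t‖ 1 with ht | ht
      · exact le_trans (hC t (by simpa [mem_closedBall, dist_eq_norm] using ht))
          (le_max_left _ _)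
      · have ht1 : 1 ≤ ‖t‖ := le_of_lt ht
        have htne : t ≠ 0 := by
          intro h0'; rw [h0'] at ht; simp at ht; linarith
        have hre : r t = (q t - 1) / t := by
          rw [hr_def, dslope_of_ne _ htne, slope_def_field, hq0]
          simp [div_eq_mul_inv, mul_comm]
        rw [hre, norm_div]
        refine le_trans ?_ (le_max_right _ _)
        have h1 : ‖q t - 1‖ ≤ ‖t‖ / ε + 1 := by
          calc ‖q t - 1‖ ≤ ‖q t‖ + ‖(1 : ℂ)‖ := norm_sub_le _ _
          _ ≤ ‖t‖ / ε + 1 := by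
              have := hqgrow t ht1; simp only [norm_one]; linarith
        have htpos : (0:ℝ) < ‖t‖ := lt_trans one_pos ht
        rw [div_le_iff₀ htpos]
        calc ‖q t - 1‖ ≤ ‖t‖ / ε + 1 := h1
        _ ≤ ‖t‖ / ε + ‖t‖ := by linarith
        _ = ‖t‖ * (1/ε) + ‖t‖ * 1 := by ring
        _ = (1 / ε + 1) * ‖t‖ := by ring
    -- Liouville: r is constant
    have hrconst : ∀ t : ℂ, r t = r 0 := by
      have hb : Bornology.IsBounded (Set.range r) := by
        rw [isBounded_iff_forall_norm_le]
        exact ⟨max C (1 / ε + 1), by rintro x ⟨t, rfl⟩; exact hrbound t⟩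
      exact fun t => hrdiff.apply_eq_apply_of_bounded hb t 0
    -- hence q t = 1 + a * t
    set a : ℂ := r 0 with ha_def
    have hqeq : ∀ t : ℂ, t ≠ 0 → q t = 1 + a * t := by
      intro t htne
      have := hrconst t
      rw [hr_def, dslope_of_ne _ htne, slope_def_field, hq0] at this
      field_simp at this
      linear_combination this
    -- a = 0 since q never vanishes
    have hqne : ∀ t : ℂ, q t ≠ 0 := fun t => inv_ne_zero (hφne t)
    have ha : a = 0 := by
      by_contra ha0
      have : q (-a⁻¹) = 0 := by
        rw [hqeq _ (neg_ne_zero.2 (inv_ne_zero ha0))]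
        field_simp
        norm_num
      exact hqne _ this
    intro t
    rcases eq_or_ne t 0 with rfl | htne
    · exact hφ0
    · have : q t = 1 := by rw [hqeq t htne, ha]; ring
      rw [hq_def] at this
      exact inv_eq_one.1 this

theorem entire_scalar_times_id_injective_eq_one {n : ℕ} (hn : 1 ≤ n)
    (h : EuclideanSpace ℂ (Fin n) → ℂ) (hhol : Differentiable ℂ h)
    (hinj : Function.Injective (fun z : EuclideanSpace ℂ (Fin n) => h z • z))
    (h0 : h 0 = 1) :
    ∀ z, h z = 1 := by
  intro z
  rcases eq_or_ne z 0 with rfl | hz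
  · exact h0
  · set φ : ℂ → ℂ := fun t => h (t • z) with hφ_def
    have hφdiff : Differentiable ℂ φ :=
      hhol.comp ((differentiable_id.smul_const z))
    have hφ0 : φ 0 = 1 := by simp [hφ_def, h0]
    have hinj1 : Function.Injective fun t : ℂ => t * φ t := by
      intro s t hst
      simp only at hst
      have key : h (s • z) • (s • z) = h (t • z) • (t • z) := by
        rw [smul_smul, smul_smul]
        rw [show h (s • z) * s = s * φ s from by rw [hφ_def]; ring,
            show h (t • z) * t = t * φ t from by rw [hφ_def]; ring, hst]
      have := hinj key
      have hsub : (s - t) • z = 0 := by rw [sub_smul, this, sub_self]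
      rcases smul_eq_zero.1 hsub with h' | h'
      · exact sub_eq_zero.1 h'
      · exact absurd h' hz
    have := one_dim_key φ hφdiff hφ0 hinj1 1
    simpa [hφ_def] using this
end

section
/- An injective entire function f : ℂ → ℂ is affine, i.e., there exist a, b ∈ ℂ with a ≠ 0 such that f(z) = a·z + b for all z. -/
open Polynomial Metric Set Filter Complex Function
open scoped Topology


/-- Entire function with polynomial growth is a polynomial. -/
lemma growth_poly : ∀ (n : ℕ) (f : ℂ → ℂ) (C R : ℝ), Differentiable ℂ f →
    (∀ w : ℂ, R ≤ ‖w‖ → ‖f w‖ ≤ C * ‖w‖ ^ n) → ∃ p : Polynomial ℂ, ∀ z, f z = p.eval z := by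
  intro n
  induction n with
  | zero =>
    intro f C R hf hb
    have hbd : Bornology.IsBounded (range f) := by
      obtain ⟨M, hM⟩ := (isCompact_closedBall (0:ℂ) |R|).exists_bound_of_continuousOn
        hf.continuous.continuousOn
      rw [isBounded_iff_forall_norm_le]
      refine ⟨max M C, ?_⟩
      rintro y ⟨w, rfl⟩
      rcases le_or_gt ‖w‖ |R| with h | h
      · exact le_max_of_le_left (hM w (by simpa using h))
      · have := hb w ((le_abs_self R).trans h.le)
        simpa using le_max_of_le_right this
    exact ⟨Polynomial.C (f 0), fun z => by
      simpa using hf.apply_eq_apply_of_bounded hbd z 0⟩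
  | succ n ih =>
    intro f C R hf hb
    set g := dslope f 0 with hg
    have hgd : Differentiable ℂ g := by
      rw [← differentiableOn_univ]
      exact (Complex.differentiableOn_dslope univ_mem).mpr hf.differentiableOn
    have hgb : ∀ w : ℂ, max R 1 ≤ ‖w‖ → ‖g w‖ ≤ (max C 0 + ‖f 0‖) * ‖w‖ ^ n := by
      intro w hw
      have hw1 : (1:ℝ) ≤ ‖w‖ := le_trans (le_max_right _ _) hw
      have hw0 : w ≠ 0 := by
        intro h; rw [h] at hw1; simp at hw1; linarith
      have hfw : ‖f w‖ ≤ max C 0 * ‖w‖ ^ (n+1) :=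
        (hb w (le_trans (le_max_left _ _) hw)).trans
          (by gcongr; exact le_max_left _ _)
      have : g w = (f w - f 0) / w := by
        rw [hg, dslope_of_ne f hw0, slope_def_field]
        field_simp
        ring
      rw [this]
      rw [norm_div]
      rw [div_le_iff₀ (by positivity)]
      calc ‖f w - f 0‖ ≤ ‖f w‖ + ‖f 0‖ := norm_sub_le _ _
        _ ≤ max C 0 * ‖w‖ ^ (n+1) + ‖f 0‖ * ‖w‖ ^ (n+1) := by
            refine add_le_add hfw ?_
            nlinarith [norm_nonneg (f 0), one_le_pow₀ hw1 (n := n+1)]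
        _ = (max C 0 + ‖f 0‖) * ‖w‖ ^ n * ‖w‖ := by ring
    obtain ⟨q, hq⟩ := ih g (max C 0 + ‖f 0‖) (max R 1) hgd hgb
    refine ⟨Polynomial.C (f 0) + Polynomial.X * q, fun z => ?_⟩
    have h1 : (z - 0) • g z = f z - f 0 := sub_smul_dslope f 0 z
    simp only [sub_zero, smul_eq_mul] at h1
    rw [eval_add, eval_C, eval_mul, eval_X, ← hq z]
    linear_combination -h1


lemma injective_poly_affine (p : Polynomial ℂ)
    (hinj : Function.Injective (fun z => p.eval z)) :
    ∃ a b : ℂ, a ≠ 0 ∧ ∀ z, p.eval z = a * z + b := by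
  rcases Nat.lt_or_ge p.natDegree 2 with hd | hd
  · interval_cases hdeg : p.natDegree
    · -- constant: contradiction with injectivity
      exfalso
      have hc : p = Polynomial.C (p.coeff 0) := Polynomial.eq_C_of_natDegree_eq_zero hdeg
      have : (0:ℂ) = 1 := hinj (by show eval 0 p = eval 1 p; rw [hc]; simp)
      exact zero_ne_one this
    · -- degree one
      have hp : p = Polynomial.C (p.coeff 1) * X + Polynomial.C (p.coeff 0) :=
        Polynomial.eq_X_add_C_of_natDegree_le_one hdeg.le
      refine ⟨p.coeff 1, p.coeff 0, ?_, fun z => by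
        conv_lhs => rw [hp]
        simp only [eval_add, eval_mul, eval_C, eval_X, mul_comm]⟩
      intro h
      have : p.natDegree = 0 := by
        rw [hp, h]; simp
      omega
  · exfalso
    set q : Polynomial ℂ := p - Polynomial.C (p.eval 0) with hq
    have hqd : q.natDegree = p.natDegree := Polynomial.natDegree_sub_C
    have hq0 : q ≠ 0 := fun h => by rw [h] at hqd; simp at hqd; omega
    have hroots : ∀ x ∈ q.roots, x = 0 := by
      intro x hx
      have : q.IsRoot x := (Polynomial.mem_roots hq0).mp hx
      have hpx : p.eval x = p.eval 0 := by
        have := this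
        simpa [hq, sub_eq_zero] using this
      exact hinj hpx
    have hcard : Multiset.card q.roots = q.natDegree :=
      Polynomial.splits_iff_card_roots.mp (IsAlgClosed.splits q)
    have hrep : q.roots = Multiset.replicate q.natDegree 0 := by
      rw [Multiset.eq_replicate]
      exact ⟨hcard, hroots⟩
    have hfact : q = Polynomial.C q.leadingCoeff * X ^ q.natDegree := by
      conv_lhs => rw [(IsAlgClosed.splits q).eq_prod_roots]
      rw [hrep, Multiset.map_replicate, Multiset.prod_replicate]
      rw [map_zero, sub_zero]
    have ha : q.leadingCoeff ≠ 0 := Polynomial.leadingCoeff_ne_zero.mpr hq0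
    -- p.eval z = a * z^d + p.eval 0
    have heval : ∀ z : ℂ, p.eval z = q.leadingCoeff * z ^ q.natDegree + p.eval 0 := by
      intro z
      have : q.eval z = q.leadingCoeff * z ^ q.natDegree := by
        conv_lhs => rw [hfact]
        simp
      simpa [hq, sub_eq_iff_eq_add] using this
    set d := q.natDegree with hdd
    have hd2 : 2 ≤ d := hqd ▸ hd
    set ζ : ℂ := Complex.exp (2 * Real.pi * Complex.I / d) with hζ
    have hprim : IsPrimitiveRoot ζ d := Complex.isPrimitiveRoot_exp d (by omega)
    have hζd : ζ ^ d = 1 := hprim.pow_eq_one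
    have : p.eval ζ = p.eval 1 := by
      rw [heval ζ, heval 1, hζd, one_pow]
    have hζ1 : ζ = 1 := hinj this
    have hdvd : (d:ℕ) ∣ 1 := hprim.dvd_of_pow_eq_one 1 (by simp [hζ1])
    have := Nat.le_of_dvd one_pos hdvd
    omega

theorem injective_entire_is_affine (f : ℂ → ℂ) (hf : Differentiable ℂ f)
    (hinj : Function.Injective f) :
    ∃ a b : ℂ, a ≠ 0 ∧ ∀ z, f z = a * z + b := by
  -- Step 1: open mapping at 0
  have hfa : AnalyticAt ℂ f 0 := hf.analyticAt 0
  have hmap : 𝓝 (f 0) ≤ map f (𝓝 0) := by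
    rcases hfa.eventually_constant_or_nhds_le_map_nhds with h | h
    · exfalso
      obtain ⟨ε, hε, hconst⟩ := Metric.eventually_nhds_iff.mp h
      have h1 : f ((ε/2 : ℝ) : ℂ) = f 0 := hconst (by
        rw [dist_zero_right, Complex.norm_real, Real.norm_eq_abs, abs_of_pos (by linarith)]
        linarith)
      have h2 : f ((ε/4 : ℝ) : ℂ) = f 0 := hconst (by
        rw [dist_zero_right, Complex.norm_real, Real.norm_eq_abs, abs_of_pos (by linarith)]
        linarith)
      have := hinj (h1.trans h2.symm)
      have : (ε/2 : ℝ) = ε/4 := by exact_mod_cast congrArg Complex.re this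
      linarith
    · exact h
  -- Step 2: ball (f 0) r ⊆ f '' ball 0 1
  have himg : f '' ball 0 1 ∈ 𝓝 (f 0) := hmap (image_mem_map (ball_mem_nhds 0 one_pos))
  obtain ⟨r, hr, hball⟩ := Metric.mem_nhds_iff.mp himg
  -- Step 3: lower bound outside the unit ball
  have hlow : ∀ w : ℂ, 1 ≤ ‖w‖ → r ≤ ‖f w - f 0‖ := by
    intro w hw
    by_contra hcon
    push_neg at hcon
    have : f w ∈ ball (f 0) r := by
      rw [mem_ball, dist_eq_norm]; exact hcon
    obtain ⟨x, hx, hfx⟩ := hball this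
    have : x = w := hinj hfx
    rw [this, mem_ball, dist_zero_right] at hx
    linarith
  -- Step 4: F on punctured unit ball
  set F : ℂ → ℂ := fun z => (f z⁻¹ - f 0)⁻¹ with hF
  have hne : ∀ z : ℂ, z ≠ 0 → f z⁻¹ - f 0 ≠ 0 := by
    intro z hz
    rw [sub_ne_zero]
    exact fun h => hz (inv_eq_zero.mp (hinj h))
  have hFd : DifferentiableOn ℂ F (ball 0 1 \ {0}) := by
    apply DifferentiableOn.inv
    · apply DifferentiableOn.sub_const
      apply hf.comp_differentiableOn
      apply DifferentiableOn.inv differentiableOn_id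
      intro z hz; exact hz.2
    · intro z hz; exact hne z hz.2
  have hFb : BddAbove (norm ∘ F '' (ball 0 1 \ {0})) := by
    refine ⟨r⁻¹, ?_⟩
    rintro y ⟨z, ⟨hz1, hz0⟩, rfl⟩
    simp only [comp_apply, hF, norm_inv]
    have hz0' : z ≠ 0 := hz0
    have h1 : 1 ≤ ‖z⁻¹‖ := by
      rw [norm_inv]
      rw [mem_ball, dist_zero_right] at hz1
      rw [le_inv_comm₀ one_pos (norm_pos_iff.mpr hz0')]
      simpa using hz1.le
    have := hlow z⁻¹ h1
    exact inv_anti₀ hr this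
  -- Step 5: removable singularity
  set G := Function.update F 0 (limUnder (𝓝[≠] (0:ℂ)) F) with hG
  have hGd : DifferentiableOn ℂ G (ball 0 1) :=
    Complex.differentiableOn_update_limUnder_of_bddAbove (ball_mem_nhds 0 one_pos) hFd hFb
  have hGa : AnalyticAt ℂ G 0 := hGd.analyticAt (isOpen_ball.mem_nhds (by simp))
  have hGF : ∀ z : ℂ, z ≠ 0 → G z = F z := fun z hz => Function.update_of_ne hz _ _
  -- Step 6: G has finite order at 0
  have hGnz : ¬ ∀ᶠ z in 𝓝 (0:ℂ), G z = 0 := by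
    intro h
    obtain ⟨ε, hε, h0⟩ := Metric.eventually_nhds_iff.mp h
    set z : ℂ := (((min ε 1)/2 : ℝ) : ℂ) with hzdef
    have hzpos : (0:ℝ) < min ε 1 / 2 := by positivity
    have hz0 : z ≠ 0 := by
      simp only [hzdef, ne_eq, Complex.ofReal_eq_zero]
      linarith
    have hzd : dist z 0 < ε := by
      simp only [hzdef, dist_zero_right, Complex.norm_real, Real.norm_eq_abs,
        abs_of_pos hzpos]
      have := min_le_left ε (1:ℝ)
      linarith
    have := h0 hzd
    rw [hGF z hz0, hF] at this
    exact inv_ne_zero (hne z hz0) this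
  obtain ⟨n, g, hgan, hgne, hgeq⟩ :=
    hGa.exists_eventuallyEq_pow_smul_nonzero_iff.mpr hGnz
  -- Step 7: growth bound for f
  obtain ⟨ε, hε, heq⟩ := Metric.eventually_nhds_iff.mp hgeq
  have hgc : ContinuousAt g 0 := hgan.continuousAt
  obtain ⟨δ, hδ, hgb⟩ := Metric.continuousAt_iff.mp hgc (‖g 0‖/2) (by
    have := norm_pos_iff.mpr hgne; linarith)
  set m : ℝ := min ε (min δ 1) with hm
  have hmpos : 0 < m := by
    simp only [hm, lt_min_iff]
    exact ⟨hε, hδ, one_pos⟩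
  have hm1 : m ≤ 1 := le_trans (min_le_right _ _) (min_le_right _ _)
  have hgrow : ∀ w : ℂ, 2/m ≤ ‖w‖ → ‖f w‖ ≤ (‖f 0‖ + 2/‖g 0‖) * ‖w‖ ^ n := by
    intro w hw
    have hw2 : (2:ℝ) ≤ ‖w‖ := le_trans (by rw [le_div_iff₀ hmpos]; linarith) hw
    have hw0 : w ≠ 0 := by
      intro h; rw [h] at hw2; simp at hw2; linarith
    set z : ℂ := w⁻¹ with hz
    have hz0 : z ≠ 0 := inv_ne_zero hw0
    have hznorm : ‖z‖ ≤ m/2 := by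
      rw [hz, norm_inv]
      calc ‖w‖⁻¹ ≤ (2/m)⁻¹ := inv_anti₀ (by positivity) hw
        _ = m/2 := by rw [inv_div]
    have hzm : ‖z‖ < m := lt_of_le_of_lt hznorm (by linarith)
    -- G z = z^n * g z
    have h1 : G z = z ^ n * g z := by
      have := heq (show dist z 0 < ε by
        rw [dist_zero_right]; exact lt_of_lt_of_le hzm (min_le_left _ _))
      simpa using this
    have h2 : G z = (f w - f 0)⁻¹ := by
      rw [hGF z hz0]
      show (f z⁻¹ - f 0)⁻¹ = (f w - f 0)⁻¹
      rw [hz, inv_inv]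
    have hgz : ‖g 0‖/2 ≤ ‖g z‖ := by
      have := hgb (show dist z 0 < δ by
        rw [dist_zero_right]
        exact lt_of_lt_of_le hzm (le_trans (min_le_right _ _) (min_le_left _ _)))
      have h3 : ‖g z - g 0‖ < ‖g 0‖/2 := by rwa [dist_eq_norm] at this
      have h4 := norm_sub_norm_le (g 0) (g z)
      have h5 : ‖g 0 - g z‖ = ‖g z - g 0‖ := norm_sub_rev _ _
      linarith
    have hgz0 : g z ≠ 0 := by
      intro h; rw [h] at hgz; simp at hgz
      have h9 := norm_pos_iff.mpr hgne
      linarith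
    have hfw0 : f w - f 0 ≠ 0 := by
      rw [sub_ne_zero]; exact fun h => hw0 (hinj h)
    have h5 : (f w - f 0)⁻¹ = z ^ n * g z := h2.symm.trans h1
    have h6 : f w - f 0 = w ^ n * (g z)⁻¹ := by
      rw [← inv_inv (f w - f 0), h5, mul_inv, ← inv_pow, hz, inv_inv]
    have h7 : ‖f w‖ ≤ ‖f 0‖ + ‖w‖^n * ‖g z‖⁻¹ := by
      calc ‖f w‖ = ‖f 0 + (f w - f 0)‖ := by ring_nf
        _ ≤ ‖f 0‖ + ‖f w - f 0‖ := norm_add_le _ _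
        _ = ‖f 0‖ + ‖w‖^n * ‖g z‖⁻¹ := by rw [h6, norm_mul, norm_pow, norm_inv]
    have h8 : ‖g z‖⁻¹ ≤ 2/‖g 0‖ := by
      calc ‖g z‖⁻¹ ≤ (‖g 0‖/2)⁻¹ := inv_anti₀ (by linarith [norm_pos_iff.mpr hgne]) hgz
        _ = 2/‖g 0‖ := by rw [inv_div]
    have hwn : (1:ℝ) ≤ ‖w‖^n := one_le_pow₀ (by linarith)
    calc ‖f w‖ ≤ ‖f 0‖ + ‖w‖^n * ‖g z‖⁻¹ := h7
      _ ≤ ‖f 0‖ * ‖w‖^n + ‖w‖^n * (2/‖g 0‖) := by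
          refine add_le_add ?_ ?_
          · nlinarith [norm_nonneg (f 0)]
          · gcongr
      _ = (‖f 0‖ + 2/‖g 0‖) * ‖w‖^n := by ring
  -- Step 8: conclude
  obtain ⟨p, hp⟩ := growth_poly n f (‖f 0‖ + 2/‖g 0‖) (2/m) hf hgrow
  have hpinj : Function.Injective (fun z => p.eval z) := by
    intro x y hxy
    exact hinj (by rw [hp x, hp y]; exact hxy)
  obtain ⟨a, b, ha, hab⟩ := injective_poly_affine p hpinj
  exact ⟨a, b, ha, fun z => by rw [hp z]; exact hab z⟩
end

section
/- If h : ℂ → ℂ is entire, h(0) = 1, and the map t ↦ h(t)·t is injective on ℂ, then h is constantly equal to 1. -/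
open Filter Metric Bornology Set Topology

theorem entire_one_dim_scalar_times_id_injective_eq_one (h : ℂ → ℂ)
    (hhol : Differentiable ℂ h) (h0 : h 0 = 1)
    (hinj : Function.Injective (fun t : ℂ => h t * t)) :
    ∀ t, h t = 1 := by
  set f : ℂ → ℂ := fun t => h t * t with hfdef
  have hfd : Differentiable ℂ f := hhol.mul differentiable_id
  have hf0 : f 0 = 0 := by simp [hfdef]
  -- h never vanishes
  have hne : ∀ z, h z ≠ 0 := by
    intro z hz
    rcases eq_or_ne z 0 with rfl | hz0
    · rw [h0] at hz; exact one_ne_zero hz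
    · have : f z = f 0 := by simp [hfdef, hz]
      exact hz0 (hinj this)
  -- open mapping at 0 gives a ball around 0 inside f '' (ball 0 1)
  have hana : AnalyticAt ℂ f 0 := hfd.analyticAt 0
  have hmap : 𝓝 (f 0) ≤ map f (𝓝 0) := by
    rcases hana.eventually_constant_or_nhds_le_map_nhds with hc | hle
    · exfalso
      rcases Metric.eventually_nhds_iff.1 hc with ⟨δ, hδ, hδc⟩
      have h1 : f (δ/2 : ℝ) = f 0 := by
        apply hδc
        simp [abs_of_pos hδ, half_lt_self hδ, hδ.le]
      have := hinj h1
      have : ((δ/2 : ℝ) : ℂ) = 0 := this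
      simp only [Complex.ofReal_eq_zero] at this
      linarith
    · exact hle
  have himg : f '' (ball 0 1) ∈ 𝓝 (0 : ℂ) := by
    rw [hf0] at hmap
    exact hmap (image_mem_map (ball_mem_nhds 0 one_pos))
  rcases Metric.mem_nhds_iff.1 himg with ⟨ε, hε, hball⟩
  -- lower bound on ‖f z‖ for ‖z‖ > 1
  have hlow : ∀ z : ℂ, 1 < ‖z‖ → ε ≤ ‖f z‖ := by
    intro z hz
    by_contra hlt
    push_neg at hlt
    have : f z ∈ ball (0 : ℂ) ε := by simpa [Complex.dist_eq] using hlt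
    rcases hball this with ⟨w, hw, hfw⟩
    have : w = z := hinj hfw
    subst this
    have hw1 : ‖w‖ < 1 := by simpa [Complex.dist_eq] using hw
    exact absurd hz hw1.asymm
  -- G z = (f z⁻¹)⁻¹ is differentiable and bounded on punctured neighborhood of 0
  set G : ℂ → ℂ := fun z => (f z⁻¹)⁻¹ with hGdef
  have hGd : ∀ᶠ z in 𝓝[≠] (0 : ℂ), DifferentiableAt ℂ G z := by
    have hball1 : ball (0 : ℂ) 1 ∈ 𝓝 (0 : ℂ) := ball_mem_nhds 0 one_pos
    filter_upwards [self_mem_nhdsWithin, nhdsWithin_le_nhds hball1] with z hz hz1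
    have hz0 : z ≠ 0 := hz
    have hzn : 1 < ‖z⁻¹‖ := by
      rw [norm_inv]
      have : ‖z‖ < 1 := by simpa [Complex.dist_eq] using hz1
      exact (one_lt_inv₀ (norm_pos_iff.2 hz0)).2 this
    have hfne : f z⁻¹ ≠ 0 := by
      intro hzero
      have := hlow _ hzn
      rw [hzero] at this; simp at this; linarith
    exact ((hfd.differentiableAt.comp z (differentiableAt_inv hz0))).inv hfne
  have hG0 : G 0 = 0 := by simp [hGdef, hf0]
  have hGb : IsBoundedUnder (· ≤ ·) (𝓝[≠] (0 : ℂ)) fun z => ‖G z - G 0‖ := by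
    refine ⟨ε⁻¹, ?_⟩
    have hball1 : ball (0 : ℂ) 1 ∈ 𝓝 (0 : ℂ) := ball_mem_nhds 0 one_pos
    rw [eventually_map]
    filter_upwards [self_mem_nhdsWithin, nhdsWithin_le_nhds hball1] with z hz hz1
    have hz0 : z ≠ 0 := hz
    have hzn : 1 < ‖z⁻¹‖ := by
      rw [norm_inv]
      have : ‖z‖ < 1 := by simpa [Complex.dist_eq] using hz1
      exact (one_lt_inv₀ (norm_pos_iff.2 hz0)).2 this
    have := hlow _ hzn
    rw [hG0, sub_zero, hGdef]
    simp only [norm_inv]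
    exact inv_anti₀ hε this
  -- G has a limit c at 0
  have hGlim : Tendsto G (𝓝[≠] (0 : ℂ))
      (𝓝 (limUnder (𝓝[≠] (0 : ℂ)) G)) :=
    Complex.tendsto_limUnder_of_differentiable_on_punctured_nhds_of_bounded_under hGd hGb
  set c : ℂ := limUnder (𝓝[≠] (0 : ℂ)) G with hcdef
  -- facts about cobounded/cocompact
  have hcoc : cocompact ℂ = cobounded ℂ := Metric.cobounded_eq_cocompact.symm
  have hinv : Tendsto (fun z : ℂ => z⁻¹) (cocompact ℂ) (𝓝[≠] (0 : ℂ)) := by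
    rw [hcoc]; exact Filter.tendsto_inv₀_cobounded'
  have hnz : ∀ᶠ z : ℂ in cocompact ℂ, z ≠ 0 := by
    rw [eventually_iff]
    exact mem_cocompact.2 ⟨{0}, isCompact_singleton, fun z hz => hz⟩
  rcases eq_or_ne c 0 with hc0 | hc0
  · -- f tends to infinity; study k z = (h z⁻¹)⁻¹
    rw [hc0] at hGlim
    set k : ℂ → ℂ := fun z => (h z⁻¹)⁻¹ with hkdef
    have hkd : ∀ᶠ z in 𝓝[≠] (0 : ℂ), DifferentiableAt ℂ k z := by
      filter_upwards [self_mem_nhdsWithin] with z hz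
      have hz0 : z ≠ 0 := hz
      exact ((hhol.differentiableAt.comp z (differentiableAt_inv hz0))).inv (hne _)
    have hk0 : k 0 = 1 := by simp [hkdef, h0]
    have hkG : ∀ z : ℂ, z ≠ 0 → k z = G z * z⁻¹ := by
      intro z hz0
      have hfz : f z⁻¹ = h z⁻¹ * z⁻¹ := rfl
      show (h z⁻¹)⁻¹ = (f z⁻¹)⁻¹ * z⁻¹
      rw [hfz, mul_inv, inv_inv, mul_assoc, mul_inv_cancel₀ hz0, mul_one]
    have ho : (fun z => k z - k 0) =o[𝓝[≠] (0 : ℂ)] fun z => (z - 0)⁻¹ := by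
      rw [Asymptotics.isLittleO_iff_tendsto']
      · have : Tendsto (fun z : ℂ => G z - z) (𝓝[≠] (0 : ℂ)) (𝓝 0) := by
          have h2 : Tendsto (fun z : ℂ => z) (𝓝[≠] (0 : ℂ)) (𝓝 0) :=
            tendsto_id.mono_left nhdsWithin_le_nhds
          simpa using hGlim.sub h2
        apply this.congr'
        filter_upwards [self_mem_nhdsWithin] with z hz
        have hz0 : z ≠ 0 := hz
        rw [hkG z hz0, hk0]
        field_simp
        ring
      · filter_upwards [self_mem_nhdsWithin] with z hz habs
        exact absurd habs (inv_ne_zero (by simpa using (hz : z ≠ (0:ℂ))))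
    have hklim : Tendsto k (𝓝[≠] (0 : ℂ))
        (𝓝 (limUnder (𝓝[≠] (0 : ℂ)) k)) :=
      Complex.tendsto_limUnder_of_differentiable_on_punctured_nhds_of_isLittleO hkd ho
    set L : ℂ := limUnder (𝓝[≠] (0 : ℂ)) k with hLdef
    rcases eq_or_ne L 0 with hL0 | hL0
    · -- then 1/h tends to 0 at infinity, contradiction with Liouville
      exfalso
      rw [hL0] at hklim
      have htend : Tendsto (fun w : ℂ => (h w)⁻¹) (cocompact ℂ) (𝓝 0) := by
        have := hklim.comp hinv
        apply this.congr'
        filter_upwards [hnz] with z hz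
        simp [hkdef, Function.comp, hz]
      have hdi : Differentiable ℂ fun w : ℂ => (h w)⁻¹ := hhol.inv hne
      have := hdi.apply_eq_of_tendsto_cocompact 0 htend
      rw [h0] at this
      simp at this
    · -- h tends to L⁻¹ at infinity, hence constant = 1
      have hhlim : Tendsto h (cocompact ℂ) (𝓝 L⁻¹) := by
        have h1 : Tendsto (fun z => (k z)⁻¹) (𝓝[≠] (0 : ℂ)) (𝓝 L⁻¹) :=
          hklim.inv₀ hL0
        have := h1.comp hinv
        apply this.congr'
        filter_upwards [hnz] with z hz
        simp [hkdef, Function.comp, hz, inv_inv]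
      intro t
      have := hhol.apply_eq_of_tendsto_cocompact t hhlim
      have h00 := hhol.apply_eq_of_tendsto_cocompact 0 hhlim
      rw [h0] at h00
      rw [this, ← h00]
  · -- f tends to finite value c⁻¹ at infinity: f constant, contradiction
    exfalso
    have hftend : Tendsto f (cocompact ℂ) (𝓝 c⁻¹) := by
      have h1 : Tendsto (fun z => (G z)⁻¹) (𝓝[≠] (0 : ℂ)) (𝓝 c⁻¹) :=
        hGlim.inv₀ hc0
      have := h1.comp hinv
      apply this.congr'
      filter_upwards [hnz] with z hz
      simp [hGdef, Function.comp, hz, inv_inv]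
    have hF0 := hfd.apply_eq_of_tendsto_cocompact 0 hftend
    have hF1 := hfd.apply_eq_of_tendsto_cocompact 1 hftend
    have : f 0 = f 1 := hF0.trans hF1.symm
    have := hinj this
    exact one_ne_zero this.symm
end

section
/- Let H : ℂⁿ → ℂⁿ be holomorphic with ‖H(z)‖ = ‖z‖ for all z, H(0) = 0, and DH(0) = I. Then H is the identity map. -/
open Set Bornology

/-- An entire function `f : ℂ → ℂ` with `f 0 = 0` and `‖f w‖ ≤ C * ‖w‖` is linear:
`f w = deriv f 0 * w`. -/
lemma entire_linear_growth {f : ℂ → ℂ} (hf : Differentiable ℂ f) (h0 : f 0 = 0)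
    {C : ℝ} (hb : ∀ w, ‖f w‖ ≤ C * ‖w‖) (w : ℂ) : f w = deriv f 0 * w := by
  set g := dslope f 0 with hg
  have hga : AnalyticAt ℂ f 0 := hf.analyticAt 0
  obtain ⟨p, hp⟩ := hga
  have hg0 : AnalyticAt ℂ g 0 := ⟨p.fslope, hp.has_fpower_series_dslope_fslope⟩
  have hgdiff : Differentiable ℂ g := by
    intro x
    rcases eq_or_ne x 0 with rfl | hx
    · exact hg0.differentiableAt
    · have : DifferentiableAt ℂ (fun y => y⁻¹ • (f y - f 0)) x := by
        apply DifferentiableAt.fun_smul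
        · exact (differentiableAt_inv hx)
        · exact (hf x).sub_const _
      refine this.congr_of_eventuallyEq ?_
      filter_upwards [isOpen_ne.mem_nhds hx] with y hy
      rw [hg, dslope_of_ne _ hy, slope_def_module, sub_zero]
  have hgbd : ∀ x, ‖g x‖ ≤ C := by
    intro x
    rcases eq_or_ne x 0 with rfl | hx
    · -- use continuity: g 0 is limit of g along {0}ᶜ
      have hcont : ContinuousAt g 0 := hgdiff.continuous.continuousAt
      have hlim : Filter.Tendsto g (nhdsWithin 0 {(0:ℂ)}ᶜ) (nhds (g 0)) :=
        hcont.continuousWithinAt.tendsto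
      have : ∀ᶠ y in nhdsWithin (0:ℂ) {(0:ℂ)}ᶜ, ‖g y‖ ≤ C := by
        filter_upwards [self_mem_nhdsWithin] with y hy
        rw [hg, dslope_of_ne _ hy, slope_def_module, sub_zero, h0, sub_zero, norm_smul,
          norm_inv]
        rcases eq_or_ne y 0 with rfl | hy0
        · simp at hy
        · rw [inv_mul_le_iff₀ (norm_pos_iff.mpr hy0), mul_comm ‖y‖ C]
          exact hb y
      have hne : (nhdsWithin (0:ℂ) {(0:ℂ)}ᶜ).NeBot := inferInstance
      exact le_of_tendsto (hlim.norm) this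
    · rw [hg, dslope_of_ne _ hx, slope_def_module, sub_zero, h0, sub_zero, norm_smul, norm_inv,
        inv_mul_le_iff₀ (norm_pos_iff.mpr hx), mul_comm ‖x‖ C]
      exact hb x
  have hconst : g w = g 0 := by
    apply hgdiff.apply_eq_apply_of_bounded
    rw [isBounded_iff_forall_norm_le]
    exact ⟨C, by rintro y ⟨x, rfl⟩; exact hgbd x⟩
  rcases eq_or_ne w 0 with rfl | hw
  · simp [h0]
  · have := hconst
    rw [hg, dslope_of_ne _ hw, dslope_same, slope_def_module, sub_zero, h0, sub_zero] at this
    have : f w = w • deriv f 0 := by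
      rw [← this, smul_smul, mul_inv_cancel₀ hw, one_smul]
    rw [this, smul_eq_mul, mul_comm]

theorem norm_preserving_normalized_is_id {n : ℕ}
    (H : EuclideanSpace ℂ (Fin n) → EuclideanSpace ℂ (Fin n))
    (hhol : Differentiable ℂ H)
    (hnorm : ∀ z, ‖H z‖ = ‖z‖) (h0 : H 0 = 0)
    (hD : fderiv ℂ H 0 = ContinuousLinearMap.id ℂ (EuclideanSpace ℂ (Fin n))) :
    ∀ z, H z = z := by
  intro z
  refine ext_inner_left ℂ (fun v => ?_)
  set f : ℂ → ℂ := fun w => inner ℂ v (H (w • z)) with hf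
  have hsm : Differentiable ℂ (fun w : ℂ => w • z) := fun w => by
    simpa using (differentiableAt_id.smul_const z)
  have hfd : Differentiable ℂ f := by
    intro w
    exact ((innerSL ℂ v).differentiableAt).comp w ((hhol _).comp w (hsm w))
  have hg0 : f 0 = 0 := by simp [hf, h0]
  have hbd : ∀ w, ‖f w‖ ≤ (‖v‖ * ‖z‖) * ‖w‖ := by
    intro w
    calc ‖f w‖ ≤ ‖v‖ * ‖H (w • z)‖ := norm_inner_le_norm v _
      _ = ‖v‖ * (‖w‖ * ‖z‖) := by rw [hnorm, norm_smul]
      _ = (‖v‖ * ‖z‖) * ‖w‖ := by ring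
  have hderiv : deriv f 0 = inner ℂ v z := by
    have h1 : HasDerivAt (fun w : ℂ => w • z) z 0 := by
      simpa using (hasDerivAt_id (0:ℂ)).smul_const z
    have h2 : HasFDerivAt H (ContinuousLinearMap.id ℂ (EuclideanSpace ℂ (Fin n))) 0 := by
      rw [← hD]; exact (hhol 0).hasFDerivAt
    have h2' : HasFDerivAt H (ContinuousLinearMap.id ℂ (EuclideanSpace ℂ (Fin n)))
        ((0:ℂ) • z) := by simpa using h2
    have h3 : HasDerivAt (fun w : ℂ => H (w • z)) z 0 := by
      simpa [Function.comp_def] using h2'.comp_hasDerivAt 0 h1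
    have h4 : HasDerivAt f (inner ℂ v z) 0 := by
      have := ((innerSL ℂ v).hasFDerivAt (x := H ((0:ℂ) • z))).comp_hasDerivAt 0 h3
      simpa [hf, Function.comp_def] using this
    exact h4.deriv
  have := entire_linear_growth hfd hg0 hbd 1
  rw [hderiv, mul_one] at this
  simpa [hf] using this
end

section
/- Let F, G : ℂⁿ → ℂⁿ be biholomorphic automorphisms of ℂⁿ with F(0) = G(0) = 0 and DF(0) = DG(0) = I. If there is an entire function f : ℂⁿ → ℂ with ‖F(z)‖ = |e^{f(z)}|·‖G(z)‖ for all z, then F = G. -/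
open Metric Set Filter Topology Complex Asymptotics

lemma lemA {n : ℕ} (H : EuclideanSpace ℂ (Fin n) → EuclideanSpace ℂ (Fin n))
    (hH : Differentiable ℂ H) (hH0 : H 0 = 0)
    (hDH : fderiv ℂ H 0 = ContinuousLinearMap.id ℂ (EuclideanSpace ℂ (Fin n)))
    (p : EuclideanSpace ℂ (Fin n) → ℂ) (hp : Differentiable ℂ p)
    (hnorm : ∀ z, ‖H z‖ = ‖Complex.exp (p z)‖ * ‖z‖) :
    ∀ w, H w = Complex.exp (p w - p 0) • w := by
  intro w
  rcases eq_or_ne w 0 with rfl | hw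
  · simp [hH0]
  have hwpos : 0 < ‖w‖ := norm_pos_iff.mpr hw
  set V : ℂ → EuclideanSpace ℂ (Fin n) := fun t => Complex.exp (-p (t • w)) • H (t • w) with hV
  have hsm : Differentiable ℂ (fun t : ℂ => t • w) := (differentiable_id.smul_const w)
  have hVd : Differentiable ℂ V :=
    ((hp.comp hsm).neg.cexp).smul (hH.comp hsm)
  have hV0 : V 0 = 0 := by simp [hV, hH0]
  have hVnorm : ∀ t, ‖V t‖ = ‖t‖ * ‖w‖ := by
    intro t
    rw [hV]
    simp only [norm_smul, hnorm, Complex.norm_exp, norm_smul]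
    rw [Complex.neg_re, Real.exp_neg]
    field_simp [Real.exp_ne_zero]
  -- maps ball 0 2 to ball (V 0) (2 * ‖w‖)
  have hmaps : MapsTo V (ball (0:ℂ) 2) (ball (V 0) (2 * ‖w‖)) := by
    intro t ht
    simp only [mem_ball, dist_eq_norm, hV0, sub_zero] at *
    rw [hVnorm]
    have : ‖t‖ < 2 := by simpa using ht
    exact (mul_lt_mul_of_pos_right this hwpos)
  have hz₀ : (1:ℂ) ∈ ball (0:ℂ) 2 := by
    simp [mem_ball, dist_eq_norm]
  have hds : ‖dslope V 0 1‖ = 2 * ‖w‖ / 2 := by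
    rw [dslope_of_ne _ (by norm_num : (1:ℂ) ≠ 0), slope_def_module]
    simp only [sub_zero, hV0, smul_eq_mul, inv_one, one_smul]
    rw [hVnorm]
    simp
  have heq := Complex.affine_of_mapsTo_ball_of_exists_norm_dslope_eq_div
    (hVd.differentiableOn) (hmaps.mono_right ball_subset_closedBall) hz₀ hds
  set C := dslope V 0 1 with hC
  -- V z = z • C near 0, so deriv V 0 = C
  have hev : V =ᶠ[𝓝 (0:ℂ)] fun z => z • C := by
    filter_upwards [isOpen_ball.mem_nhds (by simp [mem_ball] : (0:ℂ) ∈ ball (0:ℂ) 2)]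
      with z hz
    simpa [hV0] using heq hz
  have hderC : deriv V 0 = C := by
    rw [hev.deriv_eq]
    have : HasDerivAt (fun z : ℂ => z • C) ((1:ℂ) • C) 0 := (hasDerivAt_id (0:ℂ)).smul_const C
    rw [this.deriv, one_smul]
  -- compute deriv V 0 directly
  have hsm0 : HasDerivAt (fun t : ℂ => t • w) w 0 := by
    simpa using (hasDerivAt_id (0:ℂ)).smul_const w
  have hΦ : HasDerivAt (fun t : ℂ => H (t • w)) w 0 := by
    have h1 : HasFDerivAt H (fderiv ℂ H 0) ((0:ℂ) • w) := by
      rw [zero_smul]; exact (hH 0).hasFDerivAt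
    have := h1.comp_hasDerivAt 0 hsm0
    simpa [hDH, Function.comp_def] using this
  have hq : HasDerivAt (fun t : ℂ => Complex.exp (-p (t • w)))
      (Complex.exp (-p ((0:ℂ) • w)) * (-(fderiv ℂ p 0 w))) 0 := by
    have hp0 : HasFDerivAt p (fderiv ℂ p 0) ((0:ℂ) • w) := by
      rw [zero_smul]; exact (hp 0).hasFDerivAt
    have h2 : HasDerivAt (fun t : ℂ => -p (t • w)) (-(fderiv ℂ p 0 w)) 0 := by
      have := (hp0.comp_hasDerivAt 0 hsm0).neg
      exact this
    simpa using h2.cexp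
  have hVder : HasDerivAt V (Complex.exp (-p ((0:ℂ) • w)) • w
      + (Complex.exp (-p ((0:ℂ) • w)) * (-(fderiv ℂ p 0 w))) • H ((0:ℂ) • w)) 0 := hq.smul hΦ
  have hD : deriv V 0 = Complex.exp (-p 0) • w := by
    rw [hVder.deriv]
    simp [hH0]
  -- V 1 = C = deriv V 0
  have hV1 : V 1 = Complex.exp (-p 0) • w := by
    have := heq hz₀
    simp only [hV0, sub_zero, zero_add] at this
    rw [this, one_smul, ← hderC, hD]
  -- unfold V 1
  have : Complex.exp (-p w) • H w = Complex.exp (-p 0) • w := by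
    simpa [hV] using hV1
  have := congrArg (fun x => Complex.exp (p w) • x) this
  simp only [smul_smul, ← Complex.exp_add] at this
  rw [add_neg_cancel, Complex.exp_zero, one_smul] at this
  rw [this, ← sub_eq_add_neg]

lemma growth (h j : ℂ → ℂ) (hh : Differentiable ℂ h)
    (hinv : ∀ t, (t * Complex.exp (h t)) * Complex.exp (j (t * Complex.exp (h t))) = t)
    (hjc : Continuous j) :
    ∃ C : ℝ, 0 < C ∧ ∀ t, (h t).re ≤ C * (1 + Real.log (1 + ‖t‖)) := by
  set φ : ℂ → ℂ := fun t => t * Complex.exp (h t) with hφdef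
  set ψ : ℂ → ℂ := fun s => s * Complex.exp (j s) with hψdef
  have hψφ : ∀ t, ψ (φ t) = t := hinv
  have hψcont : Continuous ψ := continuous_id.mul (hjc.cexp)
  -- properness
  have hproper : Tendsto φ (cocompact ℂ) (cocompact ℂ) := by
    rw [Filter.hasBasis_cocompact.tendsto_right_iff]
    intro K hK
    filter_upwards [(hK.image hψcont).compl_mem_cocompact] with t ht hmem
    exact ht ⟨φ t, hmem, hψφ t⟩
  -- the function g z = 1 / φ (1/z)
  set g : ℂ → ℂ := fun z => z * Complex.exp (-h z⁻¹) with hgdef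
  have hg0 : g 0 = 0 := by simp [hgdef]
  have hgeq : ∀ z : ℂ, z ≠ 0 → g z = (φ z⁻¹)⁻¹ := by
    intro z hz
    simp only [hgdef, hφdef, mul_inv, inv_inv, Complex.exp_neg]
  have hgd : ∀ z : ℂ, z ≠ 0 → DifferentiableAt ℂ g z := by
    intro z hz
    exact (differentiableAt_id.mul (((hh.differentiableAt).comp z
      (differentiableAt_inv hz)).neg.cexp))
  -- tendsto of g at 0
  have hinvcc : Tendsto (fun z : ℂ => z⁻¹) (𝓝[≠] (0:ℂ)) (cocompact ℂ) := by
    have h1 : Tendsto (fun z : ℂ => ‖z⁻¹‖) (𝓝[≠] (0:ℂ)) atTop := by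
      simp only [norm_inv]
      exact tendsto_inv_nhdsGT_zero.comp tendsto_norm_nhdsNE_zero
    rw [← cobounded_eq_cocompact, ← comap_norm_atTop, tendsto_comap_iff]
    exact h1
  have hgt : Tendsto g (𝓝[≠] (0:ℂ)) (𝓝 0) := by
    have h2 : Tendsto (fun z : ℂ => ‖φ z⁻¹‖) (𝓝[≠] (0:ℂ)) atTop :=
      tendsto_norm_cocompact_atTop.comp (hproper.comp hinvcc)
    have h3 : Tendsto (fun z : ℂ => ‖g z‖) (𝓝[≠] (0:ℂ)) (𝓝 0) := by
      have h4 : Tendsto (fun z : ℂ => ‖φ z⁻¹‖⁻¹) (𝓝[≠] (0:ℂ)) (𝓝 0) := h2.inv_tendsto_atTop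
      apply h4.congr'
      filter_upwards [self_mem_nhdsWithin] with z hz
      rw [hgeq z hz, norm_inv]
    exact tendsto_zero_iff_norm_tendsto_zero.mpr h3
  have hgc : ContinuousAt g 0 := by
    have hsup : Tendsto g (𝓝[≠] (0:ℂ) ⊔ pure 0) (𝓝 (g 0)) := by
      rw [tendsto_sup]
      exact ⟨by rwa [hg0], tendsto_pure_nhds g 0⟩
    rwa [nhdsNE_sup_pure] at hsup
  have hganal : AnalyticAt ℂ g 0 :=
    Complex.analyticAt_of_differentiable_on_punctured_nhds_of_continuousAt
      (by filter_upwards [self_mem_nhdsWithin] with z hz using hgd z hz) hgc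
  have hgne : ∀ z : ℂ, z ≠ 0 → g z ≠ 0 := by
    intro z hz
    rw [hgeq z hz]
    apply inv_ne_zero
    intro hzero
    have h5 := hψφ z⁻¹
    rw [hzero] at h5
    simp only [hψdef, zero_mul] at h5
    exact inv_ne_zero hz h5.symm
  -- order of vanishing
  have hordne : analyticOrderAt g 0 ≠ ⊤ := by
    intro htop
    have hev := analyticOrderAt_eq_top.mp htop
    have hev' : ∀ᶠ z in 𝓝[≠] (0:ℂ), g z = 0 := hev.filter_mono nhdsWithin_le_nhds
    have hev'' : ∀ᶠ z in 𝓝[≠] (0:ℂ), z ≠ 0 := self_mem_nhdsWithin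
    rcases (hev'.and hev'').exists with ⟨z, hz0, hzne⟩
    exact hgne z hzne hz0
  obtain ⟨N, hN⟩ := WithTop.ne_top_iff_exists.mp hordne
  obtain ⟨u, hu_an, hu0, hufac⟩ := (hganal.analyticOrderAt_eq_natCast (n := N)).mp hN.symm
  have hN1 : 1 ≤ N := by
    rcases Nat.eq_zero_or_pos N with h0 | h1
    · exfalso
      subst h0
      have h6 := hufac.self_of_nhds
      simp only [pow_zero, sub_zero, one_smul, hg0] at h6
      exact hu0 h6.symm
    · exact h1
  -- quantitative bound near 0
  have huc : ContinuousAt u 0 := hu_an.continuousAt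
  have habs : Tendsto (fun z => ‖u z‖) (𝓝 0) (𝓝 (‖u 0‖)) :=
    (continuous_norm.continuousAt).comp huc
  have hu0pos : 0 < ‖u 0‖ := by
    simpa [norm_pos_iff] using hu0
  have hev2 : ∀ᶠ z in 𝓝 (0:ℂ), ‖u 0‖ / 2 < ‖u z‖ :=
    habs.eventually_const_lt (by linarith)
  obtain ⟨δ, hδpos, hδ⟩ := Metric.eventually_nhds_iff.mp (hufac.and hev2)
  set A := ‖u 0‖ / 2 with hA
  set R₀ := 1/δ + 1 with hR₀
  have hR₀pos : 0 < R₀ := by positivity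
  have hbig : ∀ t : ℂ, R₀ ≤ ‖t‖ →
      Real.exp ((h t).re) ≤ (2 / ‖u 0‖) * ‖t‖ ^ (N - 1) := by
    intro t ht
    have htpos : 0 < ‖t‖ := lt_of_lt_of_le hR₀pos ht
    have htne : t ≠ 0 := by
      intro h0; rw [h0] at htpos; simp at htpos
    have hzδ : dist t⁻¹ 0 < δ := by
      rw [dist_zero_right, norm_inv]
      rw [show ‖t‖ = ‖t‖ from rfl]
      have h1δ : 1/δ < ‖t‖ := lt_of_lt_of_le (by rw [hR₀]; linarith) ht
      rw [inv_lt_comm₀ htpos hδpos]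
      rw [one_div] at h1δ
      exact h1δ
    obtain ⟨hfac, hlow⟩ := hδ hzδ
    have htinv : (t⁻¹ : ℂ) ≠ 0 := inv_ne_zero htne
    have habsg : ‖g t⁻¹‖ = ‖t⁻¹‖ ^ N * ‖u t⁻¹‖ := by
      rw [hfac]
      simp [norm_mul, norm_pow, smul_eq_mul]
    have habsg' : ‖g t⁻¹‖ = (‖φ t‖)⁻¹ := by
      rw [hgeq _ htinv, inv_inv, norm_inv]
    have hφbound : ‖φ t‖ ≤ (2 / ‖u 0‖) * ‖t‖ ^ N := by
      have habstinv : ‖t⁻¹‖ = (‖t‖)⁻¹ := norm_inv _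
      have hgpos : 0 < ‖g t⁻¹‖ := by
        rw [habsg, habstinv]
        apply mul_pos (pow_pos (by positivity) N)
        linarith
      have h5 : A * (‖t‖ ^ N)⁻¹ ≤ ‖g t⁻¹‖ := by
        rw [habsg, habstinv, inv_pow]
        have hp : (0:ℝ) < (‖t‖ ^ N)⁻¹ := by positivity
        nlinarith
      have h6 : (‖φ t‖) = (‖g t⁻¹‖)⁻¹ := by
        rw [habsg', inv_inv]
      rw [h6, inv_le_comm₀ hgpos (by positivity)]
      calc ((2 / ‖u 0‖) * ‖t‖ ^ N)⁻¹
          = A * (‖t‖ ^ N)⁻¹ := by rw [hA]; field_simp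
        _ ≤ ‖g t⁻¹‖ := h5
    have hexpabs : Real.exp ((h t).re) = ‖φ t‖ / ‖t‖ := by
      rw [hφdef]
      simp only [norm_mul, Complex.norm_exp]
      field_simp
    rw [hexpabs, div_le_iff₀ htpos]
    calc ‖φ t‖ ≤ (2 / ‖u 0‖) * ‖t‖ ^ N := hφbound
      _ = (2 / ‖u 0‖) * ‖t‖ ^ (N - 1) * ‖t‖ := by
          rw [mul_assoc, ← pow_succ]
          congr 2
          omega
  -- convert to re bound for large t
  have hrebig : ∀ t : ℂ, R₀ ≤ ‖t‖ →
      (h t).re ≤ Real.log (2 / ‖u 0‖) + (N - 1 : ℕ) * Real.log (1 + ‖t‖) := by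
    intro t ht
    have htpos : 0 < ‖t‖ := lt_of_lt_of_le hR₀pos ht
    have h7 := hbig t ht
    have h8 : 0 < (2 / ‖u 0‖) * ‖t‖ ^ (N - 1) := by positivity
    have h9 := (Real.le_log_iff_exp_le h8).mpr h7
    calc (h t).re ≤ Real.log ((2 / ‖u 0‖) * ‖t‖ ^ (N - 1)) := h9
      _ = Real.log (2 / ‖u 0‖) + (N-1 : ℕ) * Real.log (‖t‖) := by
          rw [Real.log_mul (by positivity) (by positivity), Real.log_pow]
      _ ≤ _ := by
          have hll : Real.log (‖t‖) ≤ Real.log (1 + ‖t‖) :=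
            Real.log_le_log htpos (by linarith)
          nlinarith [Nat.cast_nonneg (α := ℝ) (N-1)]
  -- bound on compact part
  obtain ⟨x, _, hx⟩ := (isCompact_closedBall (0:ℂ) R₀).exists_isMaxOn
    ⟨0, by simp [hR₀pos.le]⟩ (Complex.continuous_re.comp hh.continuous).continuousOn
  set M₀ := (h x).re with hM₀def
  have hM₀ : ∀ t : ℂ, ‖t‖ ≤ R₀ → (h t).re ≤ M₀ :=
    fun t ht => hx (by simpa [Metric.mem_closedBall, dist_zero_right] using ht)
  refine ⟨max (max (|Real.log (2 / ‖u 0‖)| + (N-1:ℕ)) (max M₀ 0)) 1, by positivity, ?_⟩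
  intro t
  set C := max (max (|Real.log (2 / ‖u 0‖)| + (N-1:ℕ)) (max M₀ 0)) 1 with hCdef
  have hC1 : (1:ℝ) ≤ C := le_max_right _ _
  have hlognn : 0 ≤ Real.log (1 + ‖t‖) :=
    Real.log_nonneg (by nlinarith [norm_nonneg t])
  rcases le_or_gt (‖t‖) R₀ with hsmall | hbig'
  · have h13 := hM₀ t hsmall
    have hM₀C : M₀ ≤ C := le_trans (le_max_left _ _) (le_trans (le_max_right _ _) (le_max_left _ _))
    nlinarith
  · have h10 := hrebig t hbig'.le
    have h11 : |Real.log (2 / ‖u 0‖)| + (N-1:ℕ) ≤ C :=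
      le_trans (le_max_left _ _) (le_max_left _ _)
    have h12 : Real.log (2 / ‖u 0‖) ≤ |Real.log (2 / ‖u 0‖)| := le_abs_self _
    nlinarith [abs_nonneg (Real.log (2 / ‖u 0‖)), Nat.cast_nonneg (α := ℝ) (N-1)]

lemma borel_cara (h : ℂ → ℂ) (hh : Differentiable ℂ h) (h0 : h 0 = 0) {R M : ℝ}
    (hR : 0 < R) (hM : 0 < M)
    (hbd : ∀ t : ℂ, ‖t‖ < R → (h t).re < M) :
    ∀ t : ℂ, ‖t‖ ≤ R/2 → ‖h t‖ ≤ 2*M := by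
  set w : ℂ → ℂ := fun t => h t / (2*(M:ℂ) - h t) with hwdef
  have hden : ∀ t : ℂ, ‖t‖ < R → 2*(M:ℂ) - h t ≠ 0 := by
    intro t ht hzero
    have hre : (2*(M:ℂ) - h t).re = 2*M - (h t).re := by simp
    rw [hzero] at hre
    simp only [Complex.zero_re] at hre
    have := hbd t ht
    linarith
  have hw0 : w 0 = 0 := by simp [hwdef, h0]
  have hwdiff : DifferentiableOn ℂ w (ball (0:ℂ) R) := by
    apply DifferentiableOn.div hh.differentiableOn
    · exact (differentiable_const _).differentiableOn.sub hh.differentiableOn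
    · intro t ht
      exact hden t (by simpa [mem_ball, dist_zero_right] using ht)
  have hmaps : MapsTo w (ball (0:ℂ) R) (ball (w 0) 1) := by
    intro t ht
    have ht' : ‖t‖ < R := by simpa [mem_ball, dist_zero_right] using ht
    have hne := hden t ht'
    have hret := hbd t ht'
    rw [mem_ball, hw0, dist_zero_right]
    have hsq : (‖h t‖)^2 < (‖2*(M:ℂ) - h t‖)^2 := by
      rw [Complex.sq_norm, Complex.sq_norm, Complex.normSq_apply, Complex.normSq_apply]
      have hre : (2*(M:ℂ) - h t).re = 2*M - (h t).re := by simp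
      have him : (2*(M:ℂ) - h t).im = -(h t).im := by simp
      rw [hre, him]
      nlinarith
    have habs : ‖h t‖ < ‖2*(M:ℂ) - h t‖ :=
      lt_of_pow_lt_pow_left₀ 2 (norm_nonneg _) hsq
    have hdenpos : 0 < ‖2*(M:ℂ) - h t‖ := norm_pos_iff.mpr hne
    rw [show ‖w t‖ = ‖w t‖ from rfl, hwdef]
    simp only [norm_div]
    rw [div_lt_one hdenpos]
    exact habs
  intro t ht
  rcases eq_or_lt_of_le hR.le with h0R | hRpos
  · exfalso; exact hR.ne h0R
  have htball : t ∈ ball (0:ℂ) R := by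
    rw [mem_ball, dist_zero_right]
    rw [show ‖t‖ = ‖t‖ from rfl]
    linarith
  have hsch := Complex.dist_le_div_mul_dist_of_mapsTo_ball hwdiff (hmaps.mono_right ball_subset_closedBall) htball
  rw [hw0, dist_zero_right, dist_zero_right] at hsch
  have hwt : ‖w t‖ ≤ 1/2 := by
    have : ‖w t‖ ≤ 1/R * ‖t‖ := hsch
    rw [show ‖w t‖ = ‖w t‖ from rfl, show ‖t‖ = ‖t‖ from rfl] at this
    calc ‖w t‖ ≤ 1/R * ‖t‖ := this
      _ ≤ 1/R * (R/2) := by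
          apply mul_le_mul_of_nonneg_left ht (by positivity)
      _ = 1/2 := by field_simp
  have htR : ‖t‖ < R := by linarith
  have hne := hden t htR
  -- h t * (1 + w t) = 2M * w t
  have halg : h t * (1 + w t) = 2*(M:ℂ) * w t := by
    rw [hwdef]
    field_simp
    ring
  have h1w : (1:ℝ)/2 ≤ ‖1 + w t‖ := by
    have h3 := norm_sub_le (1 + w t) (w t)
    simp only [add_sub_cancel_right, norm_one] at h3
    linarith
  have habs_eq : ‖h t‖ * ‖1 + w t‖ = 2*M * ‖w t‖ := by
    have := congrArg (‖·‖) halg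
    simpa [norm_mul, Complex.norm_real, Real.norm_eq_abs, abs_of_pos hM, Complex.norm_two] using this
  nlinarith [norm_nonneg (h t), norm_nonneg (w t)]

lemma key1d (h j : ℂ → ℂ) (hh : Differentiable ℂ h) (hj : Differentiable ℂ j)
    (h0 : h 0 = 0)
    (hinv : ∀ t, (t * Complex.exp (h t)) * Complex.exp (j (t * Complex.exp (h t))) = t) :
    ∀ t, h t = 0 := by
  obtain ⟨C, hCpos, hC⟩ := growth h j hh hinv hj.continuous
  have hderiv : ∀ c : ℂ, deriv h c = 0 := by
    intro c
    set a := ‖c‖ with ha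
    have hanneg : 0 ≤ a := norm_nonneg _
    have hkey : ∀ R' : ℝ, 1 ≤ R' →
        ‖deriv h c‖ ≤ 2*(C * (1 + Real.log (1 + 2*(a + R'))) + 1) / R' := by
      intro R' hR'
      have hR'pos : (0:ℝ) < R' := by linarith
      set R := 2*(a + R') with hRdef
      have hRpos : 0 < R := by positivity
      set M := C * (1 + Real.log (1 + R)) + 1 with hMdef
      have hlogRnn : 0 ≤ Real.log (1 + R) := Real.log_nonneg (by linarith)
      have hMpos : 0 < M := by nlinarith
      have hbd : ∀ t : ℂ, ‖t‖ < R → (h t).re < M := by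
        intro t ht
        have h1 := hC t
        have h2 : Real.log (1 + ‖t‖) ≤ Real.log (1 + R) := by
          apply Real.log_le_log (by positivity)
          linarith
        nlinarith
      have hball := borel_cara h hh h0 hRpos hMpos hbd
      have hsphere : ∀ z ∈ sphere c R', ‖h z‖ ≤ 2*M := by
        intro z hz
        rw [mem_sphere_iff_norm] at hz
        have hzb : ‖z‖ ≤ R/2 := by
          have : ‖z‖ = ‖(z - c) + c‖ := by rw [sub_add_cancel]
          rw [this]
          calc ‖(z - c) + c‖ ≤ ‖z - c‖ + ‖c‖ := norm_add_le _ _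
            _ = R' + a := by simp only [hz, ha]
            _ = R/2 := by rw [hRdef]; ring
        exact hball z hzb
      have := Complex.norm_deriv_le_of_forall_mem_sphere_norm_le hR'pos
        hh.diffContOnCl hsphere
      calc ‖deriv h c‖ ≤ 2*M / R' := this
        _ = 2*(C * (1 + Real.log (1 + 2*(a + R'))) + 1) / R' := by rw [hMdef, hRdef]
    -- the RHS tends to 0
    set u : ℝ → ℝ := fun R' => 1 + 2*(a + R') with hu
    have haux : Tendsto u atTop atTop := by
      apply tendsto_atTop_add_const_left
      exact (tendsto_atTop_add_const_left _ _ tendsto_id).const_mul_atTop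
        (by norm_num : (0:ℝ) < 2)
    have h1 : Tendsto (fun R' : ℝ => (2*C+2)/R') atTop (𝓝 0) :=
      tendsto_const_nhds.div_atTop tendsto_id
    have h2 : Tendsto (fun R' => Real.log (u R') / u R') atTop (𝓝 0) :=
      (Real.isLittleO_log_id_atTop.comp_tendsto haux).tendsto_div_nhds_zero
    have h3 : Tendsto (fun R' => u R' / R') atTop (𝓝 2) := by
      have heq : (fun R' : ℝ => u R' / R') =ᶠ[atTop] fun R' => (1+2*a)/R' + 2 := by
        filter_upwards [eventually_ge_atTop (1:ℝ)] with R' hR'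
        have : R' ≠ 0 := by linarith
        field_simp [hu]
        ring
      rw [tendsto_congr' heq]
      have := (tendsto_const_nhds (x := (1+2*a : ℝ))).div_atTop (tendsto_id (α := ℝ))
      simpa using this.add (tendsto_const_nhds (x := (2:ℝ)))
    have htends : Tendsto (fun R' : ℝ => 2*(C * (1 + Real.log (1 + 2*(a + R'))) + 1) / R')
        atTop (𝓝 0) := by
      have hcomb : Tendsto
          (fun R' : ℝ => (2*C+2)/R' + 2*C*((Real.log (u R')/u R')*(u R'/R')))
          atTop (𝓝 ((0:ℝ) + 2*C*(0*2))) :=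
        h1.add ((tendsto_const_nhds (x := (2*C:ℝ))).mul (h2.mul h3))
      have hzero : ((0:ℝ) + 2*C*(0*2)) = 0 := by ring
      rw [hzero] at hcomb
      apply hcomb.congr'
      filter_upwards [eventually_ge_atTop (1:ℝ)] with R' hR'
      have hR'0 : R' ≠ 0 := by linarith
      have hu0 : u R' ≠ 0 := by
        have : (1:ℝ) ≤ u R' := by simp only [hu]; linarith
        linarith
      simp only [hu]
      field_simp
      ring
    have hnorm0 : ‖deriv h c‖ ≤ 0 := by
      apply ge_of_tendsto htends
      filter_upwards [eventually_ge_atTop 1] with R' hR'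
      exact hkey R' hR'
    simpa using le_antisymm hnorm0 (norm_nonneg _)
  intro t
  have := is_const_of_deriv_eq_zero hh hderiv t 0
  rwa [h0] at this

theorem normalized_automorphisms_eq_of_norm_ratio_exp {n : ℕ}
    (F G : EuclideanSpace ℂ (Fin n) → EuclideanSpace ℂ (Fin n))
    (hF : Differentiable ℂ F) (hG : Differentiable ℂ G)
    (Finv Ginv : EuclideanSpace ℂ (Fin n) → EuclideanSpace ℂ (Fin n))
    (hFinv : Differentiable ℂ Finv) (hGinv : Differentiable ℂ Ginv)
    (hFl : Function.LeftInverse Finv F) (hFr : Function.RightInverse Finv F)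
    (hGl : Function.LeftInverse Ginv G) (hGr : Function.RightInverse Ginv G)
    (hF0 : F 0 = 0) (hG0 : G 0 = 0)
    (hDF : fderiv ℂ F 0 = ContinuousLinearMap.id ℂ (EuclideanSpace ℂ (Fin n)))
    (hDG : fderiv ℂ G 0 = ContinuousLinearMap.id ℂ (EuclideanSpace ℂ (Fin n)))
    (f : EuclideanSpace ℂ (Fin n) → ℂ) (hf : Differentiable ℂ f)
    (heq : ∀ z, ‖F z‖ = ‖Complex.exp (f z)‖ * ‖G z‖) :
    F = G := by
  have hGinv0 : Ginv 0 = 0 := by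
    have := hGl 0; rwa [hG0] at this
  have hFinv0 : Finv 0 = 0 := by
    have := hFl 0; rwa [hF0] at this
  -- derivative of Ginv at 0 is id
  have hDGinv : fderiv ℂ Ginv 0 = ContinuousLinearMap.id ℂ (EuclideanSpace ℂ (Fin n)) := by
    have hcomp : G ∘ Ginv = id := funext hGr
    have h1 : fderiv ℂ (G ∘ Ginv) 0 = (fderiv ℂ G (Ginv 0)).comp (fderiv ℂ Ginv 0) :=
      fderiv_comp 0 (hG _) (hGinv 0)
    rw [hcomp, fderiv_id, hGinv0, hDG, ContinuousLinearMap.id_comp] at h1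
    exact h1.symm
  have hDFinv : fderiv ℂ Finv 0 = ContinuousLinearMap.id ℂ (EuclideanSpace ℂ (Fin n)) := by
    have hcomp : F ∘ Finv = id := funext hFr
    have h1 : fderiv ℂ (F ∘ Finv) 0 = (fderiv ℂ F (Finv 0)).comp (fderiv ℂ Finv 0) :=
      fderiv_comp 0 (hF _) (hFinv 0)
    rw [hcomp, fderiv_id, hFinv0, hDF, ContinuousLinearMap.id_comp] at h1
    exact h1.symm
  -- apply lemA to F ∘ Ginv
  have hH1 : Differentiable ℂ (F ∘ Ginv) := hF.comp hGinv
  have hH10 : (F ∘ Ginv) 0 = 0 := by simp [Function.comp, hGinv0, hF0]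
  have hDH1 : fderiv ℂ (F ∘ Ginv) 0 = ContinuousLinearMap.id ℂ (EuclideanSpace ℂ (Fin n)) := by
    have h1 : fderiv ℂ (F ∘ Ginv) 0 = (fderiv ℂ F (Ginv 0)).comp (fderiv ℂ Ginv 0) :=
      fderiv_comp 0 (hF _) (hGinv 0)
    rw [hGinv0, hDF, hDGinv, ContinuousLinearMap.id_comp] at h1
    exact h1
  have hnorm1 : ∀ z, ‖(F ∘ Ginv) z‖ = ‖Complex.exp ((f ∘ Ginv) z)‖ * ‖z‖ := by
    intro z
    have := heq (Ginv z)
    rwa [hGr z] at this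
  have hFG := lemA (F ∘ Ginv) hH1 hH10 hDH1 (f ∘ Ginv) (hf.comp hGinv) hnorm1
  -- apply lemA to G ∘ Finv
  have hH2 : Differentiable ℂ (G ∘ Finv) := hG.comp hFinv
  have hH20 : (G ∘ Finv) 0 = 0 := by simp [Function.comp, hFinv0, hG0]
  have hDH2 : fderiv ℂ (G ∘ Finv) 0 = ContinuousLinearMap.id ℂ (EuclideanSpace ℂ (Fin n)) := by
    have h1 : fderiv ℂ (G ∘ Finv) 0 = (fderiv ℂ G (Finv 0)).comp (fderiv ℂ Finv 0) :=
      fderiv_comp 0 (hG _) (hFinv 0)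
    rw [hFinv0, hDG, hDFinv, ContinuousLinearMap.id_comp] at h1
    exact h1
  have hnorm2 : ∀ z, ‖(G ∘ Finv) z‖ =
      ‖Complex.exp ((fun v => -(f (Finv v))) z)‖ * ‖z‖ := by
    intro z
    have h1 := heq (Finv z)
    rw [hFr z] at h1
    simp only [Function.comp]
    rw [Complex.norm_exp] at h1 ⊢
    rw [Complex.neg_re, Real.exp_neg]
    rw [h1]
    field_simp [Real.exp_ne_zero]
  have hGF := lemA (G ∘ Finv) hH2 hH20 hDH2 (fun v => -(f (Finv v)))
    ((hf.comp hFinv).neg) hnorm2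
  -- define k and m
  set k : EuclideanSpace ℂ (Fin n) → ℂ := fun v => f (Ginv v) - f 0 with hkdef
  set m : EuclideanSpace ℂ (Fin n) → ℂ := fun v => -(f (Finv v)) + f 0 with hmdef
  have hFGk : ∀ w, F (Ginv w) = Complex.exp (k w) • w := by
    intro w
    have := hFG w
    simp only [Function.comp, hGinv0] at this
    exact this
  have hGFm : ∀ v, G (Finv v) = Complex.exp (m v) • v := by
    intro v
    have := hGF v
    simp only [Function.comp, hFinv0] at this
    rw [this]
    congr 1
    rw [hmdef]
    ring_nf
  have hk : Differentiable ℂ k := (hf.comp hGinv).sub_const _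
  have hm : Differentiable ℂ m := ((hf.comp hFinv).neg).add_const _
  have hk0 : k 0 = 0 := by simp [hkdef, hGinv0]
  -- main pointwise argument
  funext z
  rcases eq_or_ne (G z) 0 with hGz | hGz
  · have hz0 : z = 0 := by
      have := hGl z
      rw [hGz, hGinv0] at this
      exact this.symm
    rw [hz0, hF0, hG0]
  · set w := G z with hw
    -- the 1D functions
    set h : ℂ → ℂ := fun t => k (t • w) with hhdef
    set j : ℂ → ℂ := fun s => m (s • w) with hjdef
    have hsmw : Differentiable ℂ (fun t : ℂ => t • w) := differentiable_id.smul_const w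
    have hhd : Differentiable ℂ h := hk.comp hsmw
    have hjd : Differentiable ℂ j := hm.comp hsmw
    have hh0 : h 0 = 0 := by simp only [hhdef, zero_smul]; exact hk0
    have hinj : Function.Injective (fun c : ℂ => c • w) := smul_left_injective ℂ hGz
    have hinvkey : ∀ t, (t * Complex.exp (h t)) * Complex.exp (j (t * Complex.exp (h t))) = t := by
      intro t
      -- v := t • w
      have step1 : F (Ginv (t • w)) = (t * Complex.exp (h t)) • w := by
        rw [hFGk (t • w), smul_smul]
        congr 1
        rw [hhdef]
        ring
      have step2 : G (Finv (F (Ginv (t • w)))) = t • w := by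
        rw [hFl _, hGr _]
      rw [step1] at step2
      rw [hGFm _] at step2
      rw [smul_smul] at step2
      have h5 := hinj step2
      have goal' : (t * Complex.exp (h t)) * Complex.exp (m ((t * Complex.exp (h t)) • w)) = t := by
        rw [mul_comm]; exact h5
      exact goal'
    have hzero := key1d h j hhd hjd hh0 hinvkey
    have hkw : k w = 0 := by
      have h6 := hzero 1
      simp only [hhdef, one_smul] at h6
      exact h6
    have : F z = Complex.exp (k w) • w := by
      conv_lhs => rw [← hGl z]
      exact hFGk w
    rw [this, hkw, Complex.exp_zero, one_smul]
end

section
/- Every holomorphic automorphism of ℂ is affine: if F : ℂ → ℂ is a bijective entire function with holomorphic inverse, then F(z) = F(0) + F'(0)·z for all z, with F'(0) ≠ 0. -/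
open Metric Set Bornology

theorem automorphism_of_C_is_affine (F Finv : ℂ → ℂ)
    (hF : Differentiable ℂ F) (hFinv : Differentiable ℂ Finv)
    (hl : Function.LeftInverse Finv F) (hr : Function.RightInverse Finv F) :
    (∀ z, F z = F 0 + deriv F 0 * z) ∧ deriv F 0 ≠ 0 := by
  have hinj : Function.Injective F := hl.injective
  -- the derivative of F never vanishes
  have key : ∀ z, deriv Finv (F z) * deriv F z = 1 := by
    intro z
    have h1 : HasDerivAt (Finv ∘ F) (deriv Finv (F z) * deriv F z) z :=
      (hFinv (F z)).hasDerivAt.comp z (hF z).hasDerivAt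
    have h2 : (Finv ∘ F) = id := funext hl
    rw [h2] at h1
    have h3 := h1.deriv
    simpa using h3.symm
  have hderiv_ne : ∀ z, deriv F z ≠ 0 := by
    intro z hz
    have := key z
    rw [hz, mul_zero] at this
    exact zero_ne_one this
  -- k = dslope F 0 is entire and never vanishes
  set k : ℂ → ℂ := dslope F 0 with hk_def
  have hk : Differentiable ℂ k := by
    rw [← differentiableOn_univ]
    exact (Complex.differentiableOn_dslope (Filter.univ_mem)).2 hF.differentiableOn
  have hk0 : k 0 = deriv F 0 := dslope_same F 0
  have hkmul : ∀ z, z * k z = F z - F 0 := by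
    intro z
    have := sub_smul_dslope F 0 z
    simpa [smul_eq_mul] using this
  have hkne : ∀ z, k z ≠ 0 := by
    intro z
    rcases eq_or_ne z 0 with rfl | hz
    · rw [hk0]; exact hderiv_ne 0
    · intro h
      have h2 := hkmul z
      rw [h, mul_zero] at h2
      exact hz (hinj (by linear_combination -h2))
  -- h = k⁻¹ is entire
  set h : ℂ → ℂ := fun z => (k z)⁻¹ with hh_def
  have hh : Differentiable ℂ h := fun z => ((hk z).inv (hkne z))
  have hhne : ∀ z, h z ≠ 0 := fun z => inv_ne_zero (hkne z)
  have hhmul : ∀ z, h z * (F z - F 0) = z := by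
    intro z
    rw [← hkmul z]
    show (k z)⁻¹ * (z * k z) = z
    field_simp
    rw [mul_div_right_comm, div_self (hkne z), one_mul]
  -- F is proper: preimage of the closed unit ball around F 0 is compact
  have hpre : F ⁻¹' (closedBall (F 0) 1) = Finv '' (closedBall (F 0) 1) := by
    ext w
    constructor
    · intro hw
      exact ⟨F w, hw, hl w⟩
    · rintro ⟨y, hy, rfl⟩
      show F (Finv y) ∈ closedBall (F 0) 1
      rw [hr y]; exact hy
  have hcompact : IsCompact (F ⁻¹' (closedBall (F 0) 1)) := by
    rw [hpre]
    exact (isCompact_closedBall _ _).image hFinv.continuous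
  obtain ⟨R, hR⟩ := hcompact.isBounded.exists_norm_le
  -- linear growth of h
  obtain ⟨C0, hC0⟩ := (isCompact_closedBall (0 : ℂ) (|R| + 1)).exists_bound_of_continuousOn
    hh.continuous.continuousOn
  have hC0nonneg : 0 ≤ C0 := le_trans (norm_nonneg _) (hC0 0 (by simp; positivity))
  have hgrow : ∀ z : ℂ, ‖h z‖ ≤ C0 + ‖z‖ := by
    intro z
    rcases le_or_gt ‖z‖ (|R| + 1) with hz | hz
    · have := hC0 z (by simpa [mem_closedBall, dist_eq_norm] using hz)
      nlinarith [norm_nonneg z]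
    · -- ‖z‖ > |R| + 1, hence z ∉ preimage of ball, so ‖F z - F 0‖ ≥ 1
      have hz1 : z ∉ F ⁻¹' (closedBall (F 0) 1) := by
        intro hmem
        have := hR z hmem
        have := le_abs_self R
        linarith
      have hFz : 1 ≤ ‖F z - F 0‖ := by
        by_contra hcon
        push_neg at hcon
        exact hz1 (by simpa [mem_closedBall, dist_eq_norm] using hcon.le)
      have := hhmul z
      have h2 : ‖h z‖ * ‖F z - F 0‖ = ‖z‖ := by
        rw [← norm_mul, this]
      nlinarith [norm_nonneg (h z), norm_nonneg z]
  -- the derivative of h is bounded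
  have hdh : ∀ z : ℂ, ‖deriv h z‖ ≤ 2 := by
    intro z
    set r : ℝ := C0 + ‖z‖ + 1 with hr_def
    have hrpos : 0 < r := by positivity
    have hb : ∀ w ∈ sphere z r, ‖h w‖ ≤ 2 * r := by
      intro w hw
      have hw' : ‖w - z‖ = r := by simpa [dist_eq_norm] using hw
      have : ‖w‖ ≤ ‖z‖ + r := by
        calc ‖w‖ = ‖(w - z) + z‖ := by ring_nf
        _ ≤ ‖w - z‖ + ‖z‖ := norm_add_le _ _
        _ = ‖z‖ + r := by rw [hw']; ring
      have := hgrow w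
      have hn : 0 ≤ ‖z‖ := norm_nonneg z
      nlinarith
    have := Complex.norm_deriv_le_of_forall_mem_sphere_norm_le hrpos
      hh.diffContOnCl hb
    calc ‖deriv h z‖ ≤ 2 * r / r := this
    _ = 2 := by field_simp
  -- Liouville: deriv h is constant
  have hdh_diff : Differentiable ℂ (deriv h) := by
    have := (Complex.analyticOnNhd_univ_iff_differentiable.2 hh).deriv
    exact Complex.analyticOnNhd_univ_iff_differentiable.1 this
  obtain ⟨c, hc⟩ := hdh_diff.exists_const_forall_eq_of_bounded
    (isBounded_iff_forall_norm_le.2 ⟨2, by rintro x ⟨z, rfl⟩; exact hdh z⟩)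
  -- hence h is affine: h z = h 0 + c * z
  have haff : ∀ z, h z = h 0 + c * z := by
    intro z
    have hg : Differentiable ℂ (fun w => h w - c * w) :=
      hh.sub (differentiable_id.const_mul c)
    have hg' : ∀ w, deriv (fun w => h w - c * w) w = 0 := by
      intro w
      have h1 : HasDerivAt (fun w => h w - c * w) (deriv h w - c) w := by
        have := (hh w).hasDerivAt.sub ((hasDerivAt_id w).const_mul c)
        simp only [id_eq, mul_one] at this
        exact this
      rw [h1.deriv, hc w]
      ring
    have := is_const_of_deriv_eq_zero hg hg' z 0
    simp only [mul_zero, sub_zero] at this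
    linear_combination this
  -- since h never vanishes, c = 0
  have hc0 : c = 0 := by
    by_contra hcne
    have := hhne (-(h 0) / c)
    rw [haff (-(h 0) / c)] at this
    field_simp at this
    exact this (by ring)
  -- conclude
  have hkconst : ∀ z, k z = deriv F 0 := by
    intro z
    have h1 : h z = h 0 := by rw [haff z, hc0]; ring
    have : (k z)⁻¹ = (k 0)⁻¹ := h1
    have h2 := inv_injective this
    rw [h2, hk0]
  refine ⟨fun z => ?_, hderiv_ne 0⟩
  have := hkmul z
  rw [hkconst z] at this
  linear_combination -this
end
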